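/- For fixed λ ≥ 0, the function f(λ,t) = log( (1/(1+t))·e^{−λt} + (t/(1+t))·e^{λ} ) is concave in t on [0,∞), and consequently f(λ,t) ≤ (e^{λ} − 1 − λ)·t for all t ≥ 0. -/

import Mathlib

open Real

private lemma bennett_key2 (x E E' l : ℝ) (hx : 0 ≤ x) (hE : 0 < E) (hEE' : E' * E = 1)
    (h1 : 2*(l*(1+x)) ≤ E - E') (h2 : 1 + l*(1+x) + (l*(1+x))^2/2 ≤ E) :
    (1+x*E)^2 ≤ (1+x)^2 * ((E-l)^2 - l^2*(1+x*E)) := by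
  nlinarith [mul_le_mul_of_nonneg_right h1 hE.le,
    mul_le_mul_of_nonneg_right h2 (by positivity : (0:ℝ) ≤ 2*x*E), hEE']

private lemma bennett_sinh (s : ℝ) (hs : 0 ≤ s) : 2*s ≤ exp s - exp (-s) := by
  have := Real.self_le_sinh_iff.2 hs
  rw [Real.sinh_eq] at this
  linarith

noncomputable def gB (l : ℝ) : ℝ → ℝ := fun t => Real.exp (-l*t) + t * Real.exp l

lemma gB_pos (l : ℝ) {t : ℝ} (ht : 0 ≤ t) : 0 < gB l t :=
  add_pos_of_pos_of_nonneg (exp_pos _) (mul_nonneg ht (exp_pos l).le)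

private lemma bennett_key (l x : ℝ) (hl : 0 ≤ l) (hx : 0 ≤ x) :
    (gB l x)^2 ≤
      (1+x)^2 * ((exp l - l * exp (-l*x))^2 - l^2 * exp (-l*x) * gB l x) := by
  have ha : (0:ℝ) < exp (-l*x) := exp_pos _
  have hE : (0:ℝ) < exp (l*(1+x)) := exp_pos _
  have hs : 0 ≤ l*(1+x) := mul_nonneg hl (by linarith)
  have hEE' : exp (-(l*(1+x))) * exp (l*(1+x)) = 1 := by rw [← exp_add]; simp
  have h1 : 2*(l*(1+x)) ≤ exp (l*(1+x)) - exp (-(l*(1+x))) := bennett_sinh _ hs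
  have h2 : 1 + l*(1+x) + (l*(1+x))^2/2 ≤ exp (l*(1+x)) :=
    Real.quadratic_le_exp_of_nonneg hs
  have hb : exp l = exp (-l*x) * exp (l*(1+x)) := by rw [← exp_add]; ring_nf
  have hk := bennett_key2 x (exp (l*(1+x))) (exp (-(l*(1+x)))) l hx hE hEE' h1 h2
  unfold gB
  rw [hb]
  nlinarith [mul_le_mul_of_nonneg_left hk (sq_nonneg (exp (-l*x)))]

noncomputable def FB (l : ℝ) : ℝ → ℝ := fun t => Real.log (gB l t) - Real.log (1+t)

noncomputable def FB' (l : ℝ) : ℝ → ℝ :=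
  fun t => (Real.exp l - l * Real.exp (-l*t)) / gB l t - 1/(1+t)

noncomputable def FB'' (l : ℝ) : ℝ → ℝ :=
  fun x => (l^2 * Real.exp (-l*x) * gB l x - (Real.exp l - l * Real.exp (-l*x))^2) / (gB l x)^2
    + 1/(1+x)^2

private lemma hasDerivAt_expneg (l x : ℝ) :
    HasDerivAt (fun t : ℝ => Real.exp (-l*t)) (-l * Real.exp (-l*x)) x := by
  have h0 : HasDerivAt (fun t : ℝ => -l*t) (-l) x := by
    simpa using (hasDerivAt_id x).const_mul (-l)
  simpa [mul_comm] using h0.exp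

private lemma hasDerivAt_gB (l x : ℝ) :
    HasDerivAt (gB l) (Real.exp l - l * Real.exp (-l*x)) x := by
  have h := (hasDerivAt_expneg l x).add ((hasDerivAt_id x).mul_const (Real.exp l))
  unfold gB
  exact h.congr_deriv (by ring)

private lemma hasDerivAt_FB (l : ℝ) {x : ℝ} (hx : 0 < x) :
    HasDerivAt (FB l) (FB' l x) x := by
  have hgx := gB_pos l hx.le
  have hL1 : HasDerivAt (fun t => Real.log (gB l t))
      ((Real.exp l - l * Real.exp (-l*x)) / gB l x) x :=
    (hasDerivAt_gB l x).log hgx.ne'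
  have hL2 : HasDerivAt (fun t : ℝ => Real.log (1+t)) (1/(1+x)) x := by
    have h0 : HasDerivAt (fun t : ℝ => 1+t) 1 x := (hasDerivAt_id x).const_add 1
    simpa using h0.log (by positivity : (1:ℝ)+x ≠ 0)
  exact hL1.sub hL2

private lemma hasDerivAt_FB' (l : ℝ) {x : ℝ} (hx : 0 < x) :
    HasDerivAt (FB' l) (FB'' l x) x := by
  have hgx := gB_pos l hx.le
  have hN : HasDerivAt (fun t : ℝ => Real.exp l - l * Real.exp (-l*t))
      (l^2 * Real.exp (-l*x)) x := by
    have h := ((hasDerivAt_expneg l x).const_mul l).const_sub (Real.exp l)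
    exact h.congr_deriv (by ring)
  have hdiv := hN.div (hasDerivAt_gB l x) hgx.ne'
  have hone : HasDerivAt (fun t : ℝ => 1/(1+t)) (-(1/(1+x)^2)) x := by
    have h0 : HasDerivAt (fun t : ℝ => 1+t) 1 x := (hasDerivAt_id x).const_add 1
    have h := h0.inv (by positivity : (1:ℝ)+x ≠ 0)
    simp only [one_div]
    exact h.congr_deriv (by ring)
  have h := hdiv.sub hone
  unfold FB' FB''
  have h1x : ((1:ℝ)+x) ≠ 0 := by positivity
  exact h.congr_deriv (by ring)

private lemma FB''_nonpos (l : ℝ) (hl : 0 ≤ l) {x : ℝ} (hx : 0 < x) : FB'' l x ≤ 0 := by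
  have hkey := bennett_key l x hl hx.le
  have hgx := gB_pos l hx.le
  unfold FB''
  rw [div_add_div _ _ (by positivity : (gB l x)^2 ≠ 0) (by positivity : ((1:ℝ)+x)^2 ≠ 0)]
  apply div_nonpos_of_nonpos_of_nonneg
  · nlinarith [hkey]
  · positivity

/-- Concavity in `t` of the log of Bennett's MGF bound, and the resulting linear
upper bound. -/
theorem bennett_log_concave_linear_bound (l : ℝ) (hl : 0 ≤ l) :
    ConcaveOn ℝ (Set.Ici 0)
      (fun t : ℝ => Real.log (1 / (1 + t) * Real.exp (-l * t) + t / (1 + t) * Real.exp l)) ∧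
    ∀ t : ℝ, 0 ≤ t →
      Real.log (1 / (1 + t) * Real.exp (-l * t) + t / (1 + t) * Real.exp l)
        ≤ (Real.exp l - 1 - l) * t := by
  have heq : ∀ t : ℝ, 0 ≤ t →
      (1 / (1 + t) * Real.exp (-l * t) + t / (1 + t) * Real.exp l) = gB l t / (1+t) := by
    intro t ht
    have h1t : (0:ℝ) < 1 + t := by linarith
    unfold gB
    field_simp
  constructor
  · -- concavity
    have hcont : ContinuousOn (FB l) (Set.Ici 0) := by
      have hgc : Continuous (gB l) := by
        unfold gB
        exact (continuous_exp.comp (continuous_const.mul continuous_id)).add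
          (continuous_id.mul continuous_const)
      apply ContinuousOn.sub
      · exact hgc.continuousOn.log (fun x hx => (gB_pos l hx).ne')
      · exact (continuous_const.add continuous_id).continuousOn.log
          (fun x hx => by
            have : (0:ℝ) ≤ x := hx
            show (1:ℝ) + x ≠ 0
            positivity)
    have hF : ConcaveOn ℝ (Set.Ici 0) (FB l) := by
      apply concaveOn_of_hasDerivWithinAt2_nonpos (convex_Ici 0) hcont
        (f' := FB' l) (f'' := FB'' l)
      · intro x hx
        rw [interior_Ici] at hx
        exact (hasDerivAt_FB l hx).hasDerivWithinAt
      · intro x hx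
        rw [interior_Ici] at hx
        exact (hasDerivAt_FB' l hx).hasDerivWithinAt
      · intro x hx
        rw [interior_Ici] at hx
        exact FB''_nonpos l hl hx
    refine ⟨hF.1, fun x hx y hy a b ha hb hab => ?_⟩
    have hxy : a • x + b • y ∈ Set.Ici (0:ℝ) := hF.1 hx hy ha hb hab
    have e1 : ∀ t : ℝ, 0 ≤ t →
        Real.log (1 / (1 + t) * Real.exp (-l * t) + t / (1 + t) * Real.exp l) = FB l t := by
      intro t ht
      rw [heq t ht]
      unfold FB
      rw [Real.log_div (gB_pos l ht).ne' (by positivity : (1:ℝ)+t ≠ 0)]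
    simp only [smul_eq_mul] at hxy ⊢
    rw [e1 x hx, e1 y hy, e1 _ hxy]
    have := hF.2 hx hy ha hb hab
    simpa using this
  · -- linear bound
    intro t ht
    rw [heq t ht]
    have h1t : (0:ℝ) < 1 + t := by linarith
    rw [Real.log_le_iff_le_exp (div_pos (gB_pos l ht) h1t), div_le_iff₀ h1t]
    -- key exponential facts
    have hu : 0 ≤ l * t := mul_nonneg hl ht
    have hq : 1 + l*t + (l*t)^2/2 ≤ exp (l*t) := Real.quadratic_le_exp_of_nonneg hu
    have hprod : exp (-(l*t)) * exp (l*t) = 1 := by rw [← exp_add]; simp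
    have haneg : (0:ℝ) < exp (-(l*t)) := exp_pos _
    have hub : exp (-(l*t)) ≤ 1 - l*t + (l*t)^2/2 := by
      nlinarith [mul_le_mul_of_nonneg_left hq haneg.le]
    have hK : l^2/2 ≤ exp l - 1 - l := by
      have := Real.quadratic_le_exp_of_nonneg hl
      nlinarith
    have hKt : 1 + (exp l - 1 - l)*t ≤ exp ((exp l - 1 - l)*t) := by
      have := Real.add_one_le_exp ((exp l - 1 - l)*t)
      linarith
    have hexpand := mul_le_mul_of_nonneg_left hKt (le_of_lt h1t)
    unfold gB
    have hneg : -l*t = -(l*t) := by ring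
    rw [hneg]
    calc exp (-(l*t)) + t * exp l
        ≤ 1 - l*t + (l*t)^2/2 + t * exp l := by linarith
      _ ≤ (1+t) * (1 + (exp l - 1 - l)*t) := by nlinarith [sq_nonneg t]
      _ ≤ exp ((exp l - 1 - l) * t) * (1 + t) := by linarith [hexpand]
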